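/- For α⁺, α⁻ ∈ ℝ, the homogeneous linear system A D = 0, where A is the 8×8 matrix with rows (1,0,0,1,0,0,0,0), (1,α⁺,0,0,0,0,0,0), (0,0,1,α⁺,0,0,0,0), (0,1,0,0,0,1,0,0), (0,0,0,1,0,0,0,1), (0,0,0,0,1,0,0,1), (0,0,0,0,−1,α⁻,0,0), (0,0,0,0,0,0,−1,α⁻), has a nonzero solution D ∈ ℝ⁸ if and only if α⁺ + α⁻ = 0, i.e. if and only if the vectors w⁺ = (1, α⁺) and w⁻ = (−1, α⁻) are linearly dependent. -/

import Mathlib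

/-- The vertex constraint system `A D = 0` has a nonzero solution `D ∈ ℝ⁸` if and only if
`α⁺ + α⁻ = 0`, i.e. iff `w⁺ = (1, α⁺)` and `w⁻ = (−1, α⁻)` are linearly dependent. -/
theorem nonzero_solution_iff_edges_dependent (αp αm : ℝ) :
    (∃ D : Fin 8 → ℝ, D ≠ 0 ∧
      (!![(1:ℝ), 0, 0, 1, 0, 0, 0, 0;
          1, αp, 0, 0, 0, 0, 0, 0;
          0, 0, 1, αp, 0, 0, 0, 0;
          0, 1, 0, 0, 0, 1, 0, 0;
          0, 0, 0, 1, 0, 0, 0, 1;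
          0, 0, 0, 0, 1, 0, 0, 1;
          0, 0, 0, 0, -1, αm, 0, 0;
          0, 0, 0, 0, 0, 0, -1, αm]).mulVec D = 0) ↔ αp + αm = 0 := by
  constructor
  · rintro ⟨D, hD, h⟩
    by_contra hs
    apply hD
    have hDe : D = ![D 0, D 1, D 2, D 3, D 4, D 5, D 6, D 7] := by
      funext i; fin_cases i <;> rfl
    rw [hDe] at h
    simp only [Matrix.cons_mulVec, Matrix.cons_dotProduct, Matrix.dotProduct_of_isEmpty,
      Matrix.empty_mulVec, Matrix.head_cons, Matrix.tail_cons,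
      Matrix.cons_eq_zero_iff, Matrix.zero_empty, and_true] at h
    obtain ⟨e0, e1, e2, e3, e4, e5, e6, e7⟩ := h
    have h1 : D 1 = 0 := by
      have hc : (αp + αm) * D 1 = 0 := by
        linear_combination e1 - e0 + e4 - e5 - e6 + αm * e3
      exact (mul_eq_zero.mp hc).resolve_left hs
    have d0 : D 0 = 0 := by linear_combination e1 - αp * h1
    have d3 : D 3 = 0 := by linear_combination e0 - d0
    have d2 : D 2 = 0 := by linear_combination e2 - αp * d3
    have d5 : D 5 = 0 := by linear_combination e3 - h1
    have d7 : D 7 = 0 := by linear_combination e4 - d3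
    have d4 : D 4 = 0 := by linear_combination e5 - d7
    have d6 : D 6 = 0 := by linear_combination -e7 + αm * d7
    rw [hDe]
    simp only [Matrix.cons_eq_zero_iff, Matrix.zero_empty, and_true]
    exact ⟨d0, h1, d2, d3, d4, d5, d6, d7⟩
  · intro hs
    refine ⟨![-αp, 1, -αp^2, αp, αp, -1, αp^2, -αp], ?_, ?_⟩
    · intro h
      have := congrFun h 1
      simp at this
    · simp only [Matrix.cons_mulVec, Matrix.cons_dotProduct, Matrix.dotProduct_of_isEmpty,
        Matrix.empty_mulVec, Matrix.head_cons, Matrix.tail_cons,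
        Matrix.cons_eq_zero_iff, Matrix.zero_empty, and_true]
      refine ⟨by ring, by ring, by ring, by ring, by ring, by ring,
        by linear_combination -hs, by linear_combination (-αp) * hs⟩
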